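/- Let φ₁, φ₂ > 0 and μ ∈ [0,1]. The function γ̄(β) = φ₁β/(1 + (1-β)φ₁) + φ₂(1-β)/(1 + μβφ₂) is strictly convex on [1/2, 1]: its second derivative 2φ₁²(1+φ₁)/(1+(1-β)φ₁)³ + 2μφ₂²(1+μφ₂)/(1+μβφ₂)³ is positive (for μ > 0; nonnegative for μ = 0), so its maximum over [1/2,1] is attained at an endpoint. -/

import Mathlib

lemma aux_inv_strict (c a b : ℝ) (hc : 0 < c) (hb : b ≠ 0) {s : Set ℝ}
    (hs : Convex ℝ s) (hpos : ∀ x ∈ s, 0 < a + b * x) :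
    StrictConvexOn ℝ s (fun x => c * (a + b * x)⁻¹) := by
  refine ⟨hs, fun x hx y hy hxy t u ht hu htu => ?_⟩
  have hx' : (0:ℝ) < a + b * x := hpos x hx
  have hy' : (0:ℝ) < a + b * y := hpos y hy
  have hne : a + b * x ≠ a + b * y := by
    intro h
    exact hxy (mul_left_cancel₀ hb (by linarith))
  have h := (strictConvexOn_zpow (m := (-1:ℤ)) (by decide) (by decide)).2
    hx' hy' hne ht hu htu
  simp only [smul_eq_mul, zpow_neg, zpow_one] at h ⊢
  have key : a + b * (t * x + u * y) = t * (a + b * x) + u * (a + b * y) := by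
    linear_combination (-a) * htu
  rw [key]
  nlinarith [mul_lt_mul_of_pos_left h hc]

lemma aux_affine_convex (p q : ℝ) {s : Set ℝ} (hs : Convex ℝ s) :
    ConvexOn ℝ s (fun x => p + q * x) := by
  refine ⟨hs, fun x _ y _ t u ht hu htu => ?_⟩
  simp only [smul_eq_mul]
  exact le_of_eq (by linear_combination (-p) * htu)

theorem stmt_14 (φ₁ φ₂ μ : ℝ) (hφ₁ : 0 < φ₁) (hφ₂ : 0 < φ₂)
    (hμ0 : 0 ≤ μ) (hμ1 : μ ≤ 1) :
    (∀ β ∈ Set.Icc (1 / 2 : ℝ) 1,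
      (0 < μ → 0 < 2 * φ₁ ^ 2 * (1 + φ₁) / (1 + (1 - β) * φ₁) ^ 3 +
        2 * μ * φ₂ ^ 2 * (1 + μ * φ₂) / (1 + μ * β * φ₂) ^ 3) ∧
      0 ≤ 2 * φ₁ ^ 2 * (1 + φ₁) / (1 + (1 - β) * φ₁) ^ 3 +
        2 * μ * φ₂ ^ 2 * (1 + μ * φ₂) / (1 + μ * β * φ₂) ^ 3) ∧
    (0 < μ → StrictConvexOn ℝ (Set.Icc (1 / 2 : ℝ) 1)
      (fun β : ℝ => φ₁ * β / (1 + (1 - β) * φ₁) + φ₂ * (1 - β) / (1 + μ * β * φ₂))) ∧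
    (IsMaxOn (fun β : ℝ => φ₁ * β / (1 + (1 - β) * φ₁) + φ₂ * (1 - β) / (1 + μ * β * φ₂))
        (Set.Icc (1 / 2 : ℝ) 1) (1 / 2) ∨
     IsMaxOn (fun β : ℝ => φ₁ * β / (1 + (1 - β) * φ₁) + φ₂ * (1 - β) / (1 + μ * β * φ₂))
        (Set.Icc (1 / 2 : ℝ) 1) 1) := by
  set f : ℝ → ℝ := fun β : ℝ =>
    φ₁ * β / (1 + (1 - β) * φ₁) + φ₂ * (1 - β) / (1 + μ * β * φ₂) with hf
  -- denominators positive on the interval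
  have hd1 : ∀ β ∈ Set.Icc (1 / 2 : ℝ) 1, 0 < 1 + (1 - β) * φ₁ := by
    intro β hβ
    obtain ⟨h1, h2⟩ := hβ
    nlinarith
  have hd2 : ∀ β ∈ Set.Icc (1 / 2 : ℝ) 1, 0 < 1 + μ * β * φ₂ := by
    intro β hβ
    obtain ⟨h1, h2⟩ := hβ
    nlinarith [mul_nonneg (mul_nonneg hμ0 (by linarith : (0:ℝ) ≤ β)) hφ₂.le]
  -- the strict convexity statement
  have hstrict : 0 < μ → StrictConvexOn ℝ (Set.Icc (1 / 2 : ℝ) 1) f := by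
    intro hμ
    have h1 : StrictConvexOn ℝ (Set.Icc (1 / 2 : ℝ) 1)
        (fun β : ℝ => (1 + φ₁) * ((1 + φ₁) + (-φ₁) * β)⁻¹) :=
      aux_inv_strict (1 + φ₁) (1 + φ₁) (-φ₁) (by linarith) (by simpa using hφ₁.ne')
        (convex_Icc _ _) (fun β hβ => by have := hd1 β hβ; nlinarith)
    have h2 : StrictConvexOn ℝ (Set.Icc (1 / 2 : ℝ) 1)
        (fun β : ℝ => (μ⁻¹ + φ₂) * (1 + (μ * φ₂) * β)⁻¹) :=
      aux_inv_strict (μ⁻¹ + φ₂) 1 (μ * φ₂) (by positivity) (by positivity)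
        (convex_Icc _ _) (fun β hβ => by have := hd2 β hβ; nlinarith)
    have h3 := (h1.add h2).add_const (-(1 + μ⁻¹))
    refine h3.congr fun β hβ => ?_
    have hb1 := hd1 β hβ
    have hb2 := hd2 β hβ
    simp only [hf, Pi.add_apply]
    rw [show (1 + φ₁ + -φ₁ * β) = 1 + (1 - β) * φ₁ by ring,
        show (1 + μ * φ₂ * β) = 1 + μ * β * φ₂ by ring]
    linear_combination mul_inv_cancel₀ hb1.ne' + μ⁻¹ * mul_inv_cancel₀ hb2.ne' -
      φ₂ * β * (1 + μ * β * φ₂)⁻¹ * mul_inv_cancel₀ hμ.ne'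
  refine ⟨?_, hstrict, ?_⟩
  · intro β hβ
    have hb1 := hd1 β hβ
    have hb2 := hd2 β hβ
    have hp1 : 0 < 2 * φ₁ ^ 2 * (1 + φ₁) / (1 + (1 - β) * φ₁) ^ 3 :=
      div_pos (by nlinarith [sq_nonneg φ₁]) (pow_pos hb1 3)
    have hp2 : 0 ≤ 2 * μ * φ₂ ^ 2 * (1 + μ * φ₂) / (1 + μ * β * φ₂) ^ 3 := by
      apply div_nonneg _ (pow_pos hb2 3).le
      have : (0:ℝ) ≤ 1 + μ * φ₂ := by nlinarith
      nlinarith [sq_nonneg φ₂, mul_nonneg hμ0 (sq_nonneg φ₂)]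
    exact ⟨fun _ => by linarith, by linarith⟩
  · -- maximum at an endpoint, via convexity (valid for all μ ≥ 0)
    have hconv : ConvexOn ℝ (Set.Icc (1 / 2 : ℝ) 1) f := by
      rcases hμ0.eq_or_lt with hμ | hμ
      · -- μ = 0 : second term is affine
        have h1 : StrictConvexOn ℝ (Set.Icc (1 / 2 : ℝ) 1)
            (fun β : ℝ => (1 + φ₁) * ((1 + φ₁) + (-φ₁) * β)⁻¹) :=
          aux_inv_strict (1 + φ₁) (1 + φ₁) (-φ₁) (by linarith) (by simpa using hφ₁.ne')
            (convex_Icc _ _) (fun β hβ => by have := hd1 β hβ; nlinarith)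
        have h2 : ConvexOn ℝ (Set.Icc (1 / 2 : ℝ) 1)
            (fun β : ℝ => (-1 + φ₂) + (-φ₂) * β) :=
          aux_affine_convex _ _ (convex_Icc _ _)
        refine (h1.convexOn.add h2).congr fun β hβ => ?_
        have hb1 := hd1 β hβ
        simp only [hf, Pi.add_apply, ← hμ]
        rw [show (1 + φ₁ + -φ₁ * β) = 1 + (1 - β) * φ₁ by ring]
        linear_combination mul_inv_cancel₀ hb1.ne'
      · exact (hstrict hμ).convexOn
    have hhalf : (1 / 2 : ℝ) ∈ Set.Icc (1 / 2 : ℝ) 1 := by constructor <;> norm_num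
    have hone : (1 : ℝ) ∈ Set.Icc (1 / 2 : ℝ) 1 := by constructor <;> norm_num
    have hbound : ∀ z ∈ Set.Icc (1 / 2 : ℝ) 1, f z ≤ max (f (1 / 2)) (f 1) := by
      intro z hz
      exact hconv.le_on_segment hhalf hone
        (by rwa [segment_eq_Icc (by norm_num : (1/2:ℝ) ≤ 1)])
    rcases le_total (f 1) (f (1 / 2)) with h | h
    · left
      intro z hz
      have := hbound z hz
      simp only [Set.mem_setOf_eq]
      calc f z ≤ max (f (1/2)) (f 1) := this
        _ ≤ f (1/2) := max_le le_rfl h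
    · right
      intro z hz
      have := hbound z hz
      simp only [Set.mem_setOf_eq]
      calc f z ≤ max (f (1/2)) (f 1) := this
        _ ≤ f 1 := max_le h le_rfl
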